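/- (Time-harmonic steady state of the TLM scattering process.) Let E and F be complex Banach spaces and let K : E → E, L : F → E, M : E → F, and N : F → F be continuous linear maps with ‖N‖ < 1. Fix θ ∈ ℝ and z₀ ∈ E, and consider the time-harmonic input z_in(n) = e^{iθn} z₀ for n ∈ ℤ. Then for every n ∈ ℤ the series z_out(n) = K(z_in(n)) + Σ_{μ=0}^∞ L(N^μ(M(z_in(n−μ−1)))) converges absolutely, and z_out(n) = e^{iθn} · S̃(z₀), where S̃ = K + L ∘ (e^{iθ}·id_F − N)⁻¹ ∘ M. -/

import Mathlib

set_option maxHeartbeats 1000000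


/-- Time-harmonic steady state of the TLM scattering process: for the input
`z_in(n) = e^{iθn} z₀` the scattering series converges absolutely and the
output equals `e^{iθn}` times the frequency-domain S-matrix applied to `z₀`. -/
theorem tlm_time_harmonic_steady_state
    (E F : Type*)
    [NormedAddCommGroup E] [NormedSpace ℂ E] [CompleteSpace E]
    [NormedAddCommGroup F] [NormedSpace ℂ F] [CompleteSpace F]
    (K : E →L[ℂ] E) (L : F →L[ℂ] E) (M : E →L[ℂ] F) (N : F →L[ℂ] F)
    (hN : ‖N‖ < 1) (θ : ℝ) (z₀ : E)
    (z_in : ℤ → E)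
    (hz : ∀ n : ℤ, z_in n = Complex.exp ((n : ℂ) * θ * Complex.I) • z₀) :
    ∀ n : ℤ,
      Summable (fun μ : ℕ => ‖L ((N ^ μ) (M (z_in (n - μ - 1))))‖) ∧
        K (z_in n) + ∑' μ : ℕ, L ((N ^ μ) (M (z_in (n - μ - 1))))
          = Complex.exp ((n : ℂ) * θ * Complex.I) •
              ((K + L ∘L Ring.inverse
                  (Complex.exp (θ * Complex.I) • (1 : F →L[ℂ] F) - N) ∘L M) z₀) := by
  intro n
  set c : ℂ := Complex.exp (θ * Complex.I) with hc
  set e : ℂ := Complex.exp ((n : ℂ) * θ * Complex.I) with he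
  have hc0 : c ≠ 0 := Complex.exp_ne_zero _
  have hcnorm : ‖c‖ = 1 := by
    simp [hc, Complex.norm_exp]
  have hcinv : ‖c⁻¹‖ = 1 := by rw [norm_inv, hcnorm]; norm_num
  set t : F →L[ℂ] F := c⁻¹ • N with ht'
  have htnorm : ‖t‖ < 1 :=
    lt_of_le_of_lt (norm_smul_le c⁻¹ N) (by rw [hcinv, one_mul]; exact hN)
  -- per-term rewriting
  have hterm : ∀ μ : ℕ,
      L ((N ^ μ) (M (z_in (n - μ - 1)))) = (e * c⁻¹ ^ (μ + 1)) • L ((N ^ μ) (M z₀)) := by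
    intro μ
    have hx : Complex.exp (((n - (μ : ℤ) - 1 : ℤ) : ℂ) * θ * Complex.I)
        = e * c⁻¹ ^ (μ + 1) := by
      have h1 : (((n - (μ : ℤ) - 1 : ℤ) : ℂ)) * θ * Complex.I
          = (n : ℂ) * θ * Complex.I + -((((μ + 1 : ℕ)) : ℂ) * (θ * Complex.I)) := by
        push_cast; ring
      rw [h1, Complex.exp_add, Complex.exp_neg, Complex.exp_nat_mul, ← hc, ← he, inv_pow]
    rw [hz, hx, map_smul, map_smul, map_smul]
  -- bound on operator powers
  have hNp : ∀ μ : ℕ, ‖(N ^ μ : F →L[ℂ] F)‖ ≤ ‖N‖ ^ μ := by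
    intro μ
    induction μ with
    | zero => rw [pow_zero, pow_zero]; exact ContinuousLinearMap.norm_id_le
    | succ k ih =>
      rw [pow_succ, pow_succ]
      exact le_trans (norm_mul_le _ _) (by gcongr)
  have hbound : ∀ μ : ℕ,
      ‖L ((N ^ μ) (M (z_in (n - μ - 1))))‖ ≤ (‖e‖ * ‖L‖ * ‖M z₀‖) * ‖N‖ ^ μ := by
    intro μ
    rw [hterm μ, norm_smul, norm_mul, norm_pow, hcinv, one_pow, mul_one]
    have h1 : ‖L ((N ^ μ) (M z₀))‖ ≤ ‖L‖ * (‖N‖ ^ μ * ‖M z₀‖) := by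
      refine le_trans (L.le_opNorm _) ?_
      gcongr
      exact le_trans ((N ^ μ).le_opNorm _) (by gcongr; exact hNp μ)
    calc ‖e‖ * ‖L ((N ^ μ) (M z₀))‖ ≤ ‖e‖ * (‖L‖ * (‖N‖ ^ μ * ‖M z₀‖)) := by
          gcongr
      _ = (‖e‖ * ‖L‖ * ‖M z₀‖) * ‖N‖ ^ μ := by ring
  have hsum_norm : Summable (fun μ : ℕ => ‖L ((N ^ μ) (M (z_in (n - μ - 1))))‖) := by
    refine Summable.of_nonneg_of_le (fun μ => norm_nonneg _) hbound ?_
    exact (summable_geometric_of_lt_one (norm_nonneg N) hN).mul_left _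
  refine ⟨hsum_norm, ?_⟩
  -- summability of the vector series
  have hvec : Summable (fun μ : ℕ => c⁻¹ ^ (μ + 1) • (N ^ μ) (M z₀)) := by
    refine Summable.of_norm ?_
    refine Summable.of_nonneg_of_le (fun μ => norm_nonneg _) (fun μ => ?_)
      ((summable_geometric_of_lt_one (norm_nonneg N) hN).mul_left ‖M z₀‖)
    rw [norm_smul, norm_pow, hcinv, one_pow, one_mul]
    calc ‖(N ^ μ) (M z₀)‖ ≤ ‖N ^ μ‖ * ‖M z₀‖ := (N ^ μ).le_opNorm _
      _ ≤ ‖N‖ ^ μ * ‖M z₀‖ := by gcongr; exact hNp μ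
      _ = ‖M z₀‖ * ‖N‖ ^ μ := by ring
  -- compute Ring.inverse
  have hS : Summable (fun μ : ℕ => t ^ μ) := summable_geometric_of_norm_lt_one htnorm
  set v : (F →L[ℂ] F)ˣ := Units.oneSub t htnorm with hv
  have hu1 : (c • (1 : F →L[ℂ] F)) * (c⁻¹ • 1) = 1 := by
    rw [smul_mul_assoc, mul_smul_comm, smul_smul, mul_one, mul_inv_cancel₀ hc0, one_smul]
  have hu2 : (c⁻¹ • (1 : F →L[ℂ] F)) * (c • 1) = 1 := by
    rw [smul_mul_assoc, mul_smul_comm, smul_smul, mul_one, inv_mul_cancel₀ hc0, one_smul]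
  set u : (F →L[ℂ] F)ˣ := ⟨c • 1, c⁻¹ • 1, hu1, hu2⟩ with hu
  have hval : c • (1 : F →L[ℂ] F) - N = ↑(u * v) := by
    show c • (1 : F →L[ℂ] F) - N = (c • 1) * (1 - t)
    rw [mul_sub, mul_one, smul_mul_assoc, one_mul, ht', smul_smul,
      mul_inv_cancel₀ hc0, one_smul]
  have hinv : Ring.inverse (c • (1 : F →L[ℂ] F) - N)
      = (∑' μ : ℕ, t ^ μ) * (c⁻¹ • 1) := by
    rw [hval, Ring.inverse_unit, mul_inv_rev]
    rfl
  -- the series applied to `M z₀`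
  have happ : ((∑' μ : ℕ, t ^ μ) * (c⁻¹ • 1)) (M z₀)
      = ∑' μ : ℕ, c⁻¹ ^ (μ + 1) • (N ^ μ) (M z₀) := by
    have h1 : ((∑' μ : ℕ, t ^ μ) * (c⁻¹ • 1)) (M z₀)
        = c⁻¹ • (∑' μ : ℕ, t ^ μ) (M z₀) := by
      simp [ContinuousLinearMap.mul_apply, map_smul]
    have h2 : (∑' μ : ℕ, t ^ μ) (M z₀) = ∑' μ : ℕ, (t ^ μ) (M z₀) := by
      exact (ContinuousLinearMap.apply ℂ F (M z₀)).map_tsum hS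
    rw [h1, h2]
    have h3 : ∀ μ : ℕ, (t ^ μ) (M z₀) = c⁻¹ ^ μ • (N ^ μ) (M z₀) := by
      intro μ
      rw [ht', smul_pow]
      simp
    calc c⁻¹ • ∑' μ : ℕ, (t ^ μ) (M z₀)
        = ∑' μ : ℕ, c⁻¹ • (t ^ μ) (M z₀) := by
          refine (Summable.tsum_const_smul _ ?_).symm
          exact hS.map (ContinuousLinearMap.apply ℂ F (M z₀))
            (ContinuousLinearMap.continuous _)
      _ = ∑' μ : ℕ, c⁻¹ ^ (μ + 1) • (N ^ μ) (M z₀) := by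
          refine tsum_congr fun μ => ?_
          rw [h3 μ, smul_smul, ← pow_succ']
  -- assemble
  have hK : K (z_in n) = e • K z₀ := by rw [hz, map_smul]
  have htsum : (∑' μ : ℕ, L ((N ^ μ) (M (z_in (n - μ - 1)))))
      = e • L (∑' μ : ℕ, c⁻¹ ^ (μ + 1) • (N ^ μ) (M z₀)) := by
    calc (∑' μ : ℕ, L ((N ^ μ) (M (z_in (n - μ - 1)))))
        = ∑' μ : ℕ, e • (c⁻¹ ^ (μ + 1) • L ((N ^ μ) (M z₀))) := by
          refine tsum_congr fun μ => ?_
          rw [hterm μ, mul_smul]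
      _ = e • ∑' μ : ℕ, c⁻¹ ^ (μ + 1) • L ((N ^ μ) (M z₀)) := by
          refine Summable.tsum_const_smul _ ?_
          refine Summable.of_norm ?_
          refine Summable.of_nonneg_of_le (fun μ => norm_nonneg _) (fun μ => ?_)
            ((summable_geometric_of_lt_one (norm_nonneg N) hN).mul_left (‖L‖ * ‖M z₀‖))
          rw [norm_smul, norm_pow, hcinv, one_pow, one_mul]
          calc ‖L ((N ^ μ) (M z₀))‖ ≤ ‖L‖ * ((‖N‖ ^ μ) * ‖M z₀‖) := by
                refine le_trans (L.le_opNorm _) ?_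
                gcongr
                exact le_trans ((N ^ μ).le_opNorm _) (by gcongr; exact hNp μ)
            _ = ‖L‖ * ‖M z₀‖ * ‖N‖ ^ μ := by ring
      _ = e • L (∑' μ : ℕ, c⁻¹ ^ (μ + 1) • (N ^ μ) (M z₀)) := by
          congr 1
          rw [L.map_tsum hvec]
          simp [map_smul]
  rw [hK, htsum, ← smul_add]
  congr 1
  simp only [ContinuousLinearMap.add_apply, ContinuousLinearMap.comp_apply]
  rw [hinv, happ]
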